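/- Let A be a densely defined closed operator on H with dist(W(A), spec(C)) = δ > 0, where W(A) is the numerical range of A, C normal on K with spectral measure E_C, and D ∈ B(H,K) with finite E_C-norm. Then the strong solution X = ∫_{spec(C)} dE_C(ζ) D (A-ζ)^{-1} of XA - CX = D satisfies ‖X‖_{E_C} ≤ (1/δ) ‖D‖_{E_C}. -/

import Mathlib

open Set Complex Filter
open scoped InnerProductSpace Topology Classical

noncomputable section

variable {H K : Type*}
  [NormedAddCommGroup H] [InnerProductSpace ℂ H] [CompleteSpace H]
  [NormedAddCommGroup K] [InnerProductSpace ℂ K] [CompleteSpace K]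

/-- A projection-valued (spectral) measure on the Borel subsets of `ℂ`,
acting on the Hilbert space `K`. -/
structure SpectralMeasure (K : Type*) [NormedAddCommGroup K] [InnerProductSpace ℂ K]
    [CompleteSpace K] where
  proj : Set ℂ → K →L[ℂ] K
  selfAdjoint : ∀ {Ω : Set ℂ}, MeasurableSet Ω → IsSelfAdjoint (proj Ω)
  mul_inter : ∀ {Ω Ω' : Set ℂ}, MeasurableSet Ω → MeasurableSet Ω' →
    proj (Ω ∩ Ω') = (proj Ω).comp (proj Ω')
  add_union : ∀ {Ω Ω' : Set ℂ}, MeasurableSet Ω → MeasurableSet Ω' → Disjoint Ω Ω' →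
    proj (Ω ∪ Ω') = proj Ω + proj Ω'
  proj_univ : proj Set.univ = 1

/-- The spectral function `Ê(λ,μ) = E({x+iy : x < λ, y < μ})`. -/
def SpectralMeasure.hatE (E : SpectralMeasure K) (l m : ℝ) : K →L[ℂ] K :=
  E.proj {z : ℂ | z.re < l ∧ z.im < m}

/-- The half-open rectangle `[l,l') × i[m,m')` in `ℂ`. -/
def rectC (l l' m m' : ℝ) : Set ℂ :=
  {z : ℂ | l ≤ z.re ∧ z.re < l' ∧ m ≤ z.im ∧ z.im < m'}

/-- A tagged partition of the half-open interval `[a,b)` into half-open subintervals,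
with a sample point (tag) in each subinterval. -/
structure TaggedPartition (a b : ℝ) where
  n : ℕ
  npos : 0 < n
  pts : ℕ → ℝ
  tags : ℕ → ℝ
  mono : ∀ i < n, pts i < pts (i + 1)
  first : pts 0 = a
  last : pts n = b
  tag_mem : ∀ i < n, pts i ≤ tags i ∧ tags i < pts (i + 1)

/-- The mesh (maximal subinterval length) of a tagged partition. -/
def TaggedPartition.mesh {a b : ℝ} (P : TaggedPartition a b) : ℝ :=
  sSup {r : ℝ | ∃ i < P.n, r = P.pts (i + 1) - P.pts i}

/-- The Riemann–Stieltjes sum `Σ_j Σ_k F(ξ_j,ζ_k) E(δ_j × ω_k)` for the right integral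
`∫ F dE` over the rectangle `[a,b) × [c,d)`. -/
def rightSum (E : SpectralMeasure K) (F : ℝ → ℝ → (K →L[ℂ] H))
    {a b c d : ℝ} (P : TaggedPartition a b) (Q : TaggedPartition c d) : K →L[ℂ] H :=
  ∑ j ∈ Finset.range P.n, ∑ k ∈ Finset.range Q.n,
    (F (P.tags j) (Q.tags k)).comp
      (E.proj (rectC (P.pts j) (P.pts (j + 1)) (Q.pts k) (Q.pts (k + 1))))

/-- The Riemann–Stieltjes sum `Σ_j Σ_k E(δ_j × ω_k) G(ξ_j,ζ_k)` for the left integral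
`∫ dE G` over the rectangle `[a,b) × [c,d)`. -/
def leftSum (E : SpectralMeasure K) (G : ℝ → ℝ → (H →L[ℂ] K))
    {a b c d : ℝ} (P : TaggedPartition a b) (Q : TaggedPartition c d) : H →L[ℂ] K :=
  ∑ j ∈ Finset.range P.n, ∑ k ∈ Finset.range Q.n,
    (E.proj (rectC (P.pts j) (P.pts (j + 1)) (Q.pts k) (Q.pts (k + 1)))).comp
      (G (P.tags j) (Q.tags k))

/-- `F` is right-integrable w.r.t. `dE` on `[a,b) × [c,d)` in the uniform operator
topology, with integral `J`. -/
def HasRightIntegralUnif (E : SpectralMeasure K) (F : ℝ → ℝ → (K →L[ℂ] H))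
    (a b c d : ℝ) (J : K →L[ℂ] H) : Prop :=
  ∀ ε > 0, ∃ δ > 0, ∀ (P : TaggedPartition a b) (Q : TaggedPartition c d),
    P.mesh < δ → Q.mesh < δ → ‖rightSum E F P Q - J‖ < ε

/-- `F` is right-integrable in the strong operator topology. -/
def HasRightIntegralStrong (E : SpectralMeasure K) (F : ℝ → ℝ → (K →L[ℂ] H))
    (a b c d : ℝ) (J : K →L[ℂ] H) : Prop :=
  ∀ x : K, ∀ ε > 0, ∃ δ > 0, ∀ (P : TaggedPartition a b) (Q : TaggedPartition c d),
    P.mesh < δ → Q.mesh < δ → ‖rightSum E F P Q x - J x‖ < ε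

/-- `F` is right-integrable in the weak operator topology. -/
def HasRightIntegralWeak (E : SpectralMeasure K) (F : ℝ → ℝ → (K →L[ℂ] H))
    (a b c d : ℝ) (J : K →L[ℂ] H) : Prop :=
  ∀ (x : K) (y : H), ∀ ε > 0, ∃ δ > 0, ∀ (P : TaggedPartition a b) (Q : TaggedPartition c d),
    P.mesh < δ → Q.mesh < δ → ‖⟪y, rightSum E F P Q x - J x⟫_ℂ‖ < ε

/-- `G` is left-integrable w.r.t. `dE` on `[a,b) × [c,d)` in the uniform operator
topology, with integral `J`. -/
def HasLeftIntegralUnif (E : SpectralMeasure K) (G : ℝ → ℝ → (H →L[ℂ] K))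
    (a b c d : ℝ) (J : H →L[ℂ] K) : Prop :=
  ∀ ε > 0, ∃ δ > 0, ∀ (P : TaggedPartition a b) (Q : TaggedPartition c d),
    P.mesh < δ → Q.mesh < δ → ‖leftSum E G P Q - J‖ < ε

/-- `G` is left-integrable in the strong operator topology. -/
def HasLeftIntegralStrong (E : SpectralMeasure K) (G : ℝ → ℝ → (H →L[ℂ] K))
    (a b c d : ℝ) (J : H →L[ℂ] K) : Prop :=
  ∀ x : H, ∀ ε > 0, ∃ δ > 0, ∀ (P : TaggedPartition a b) (Q : TaggedPartition c d),
    P.mesh < δ → Q.mesh < δ → ‖leftSum E G P Q x - J x‖ < ε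

/-- `G` is left-integrable in the weak operator topology. -/
def HasLeftIntegralWeak (E : SpectralMeasure K) (G : ℝ → ℝ → (H →L[ℂ] K))
    (a b c d : ℝ) (J : H →L[ℂ] K) : Prop :=
  ∀ (x : H) (y : K), ∀ ε > 0, ∃ δ > 0, ∀ (P : TaggedPartition a b) (Q : TaggedPartition c d),
    P.mesh < δ → Q.mesh < δ → ‖⟪y, leftSum E G P Q x - J x⟫_ℂ‖ < ε

/-- `E` is the spectral measure of the (possibly unbounded) normal operator `C`:
on the range of any spectral projection of a finite rectangle, `C` acts as the
operator Stieltjes integral `∫ z dE(z)`. -/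
def SpectralMeasure.Represents (E : SpectralMeasure K) (C : K →ₗ.[ℂ] K) : Prop :=
  ∀ a b c d : ℝ, a < b → c < d → ∀ T : K →L[ℂ] K,
    HasLeftIntegralUnif E (fun l m => ((l : ℂ) + (m : ℂ) * Complex.I) • (1 : K →L[ℂ] K))
      a b c d T →
    ∀ x : K, ∃ h : E.proj (rectC a b c d) x ∈ C.domain,
      C ⟨E.proj (rectC a b c d) x, h⟩ = T x

/-- The support of a spectral measure; for the spectral measure of a normal
operator `C` this is `spec(C)`. -/
def specSupp (E : SpectralMeasure K) : Set ℂ :=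
  {z : ℂ | ∀ ε > 0, E.proj (Metric.ball z ε) ≠ 0}

/-- The set of finite sums `Σ_k ‖Y* E(Ω_k) Y‖` over finite systems of mutually
disjoint Borel subsets of `ℂ`. -/
def EnormSet (E : SpectralMeasure K) (Y : H →L[ℂ] K) : Set ℝ :=
  {r : ℝ | ∃ (n : ℕ) (Ω : ℕ → Set ℂ), (∀ i, MeasurableSet (Ω i)) ∧
    (∀ i < n, ∀ j < n, i ≠ j → Disjoint (Ω i) (Ω j)) ∧
    r = ∑ i ∈ Finset.range n,
      ‖(ContinuousLinearMap.adjoint Y).comp ((E.proj (Ω i)).comp Y)‖}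

/-- The norm `‖Y‖_E` of `Y` with respect to the spectral measure `E`. -/
def Enorm (E : SpectralMeasure K) (Y : H →L[ℂ] K) : ℝ :=
  Real.sqrt (sSup (EnormSet E Y))

/-- `R` is the (bounded, everywhere defined) resolvent `(A - ζ)⁻¹` of the possibly
unbounded operator `A` at the point `ζ`. -/
def IsResolventAt (A : H →ₗ.[ℂ] H) (ζ : ℂ) (R : H →L[ℂ] H) : Prop :=
  ∃ hmem : ∀ x : H, R x ∈ A.domain,
    (∀ x : H, A ⟨R x, hmem x⟩ - ζ • R x = x) ∧
    (∀ f : A.domain, R (A f - ζ • (f : H)) = f)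

/-- The resolvent set of a possibly unbounded operator. -/
def pmResolventSet (A : H →ₗ.[ℂ] H) : Set ℂ := {ζ : ℂ | ∃ R, IsResolventAt A ζ R}

/-- The spectrum of a possibly unbounded operator. -/
def pmSpectrum (A : H →ₗ.[ℂ] H) : Set ℂ := (pmResolventSet A)ᶜ

/-- The numerical range `W(A) = {⟨Ax,x⟩ : x ∈ Dom(A), ‖x‖ = 1}`. -/
def numRange (A : H →ₗ.[ℂ] H) : Set ℂ :=
  {z : ℂ | ∃ f : A.domain, ‖(f : H)‖ = 1 ∧ z = ⟪(f : H), A f⟫_ℂ}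

/-- `X` is a weak solution of the Sylvester equation `XA - CX = D`. -/
def IsWeakSolutionSylvester (A : H →ₗ.[ℂ] H) (C : K →ₗ.[ℂ] K) (D X : H →L[ℂ] K) : Prop :=
  ∀ (f : A.domain) (g : C.adjoint.domain),
    ⟪(g : K), X (A f)⟫_ℂ - ⟪C.adjoint g, X (f : H)⟫_ℂ = ⟪(g : K), D (f : H)⟫_ℂ

/-- `X` is a strong solution of the Sylvester equation `XA - CX = D`. -/
def IsStrongSolutionSylvester (A : H →ₗ.[ℂ] H) (C : K →ₗ.[ℂ] K) (D X : H →L[ℂ] K) : Prop :=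
  ∀ f : A.domain, ∃ h : X (f : H) ∈ C.domain,
    X (A f) - C ⟨X (f : H), h⟩ = D (f : H)

/-- `X` is a weak solution of the Riccati equation `XA - CX + XBX = D`. -/
def IsWeakSolutionRiccati (A : H →ₗ.[ℂ] H) (C : K →ₗ.[ℂ] K) (B : K →L[ℂ] H)
    (D X : H →L[ℂ] K) : Prop :=
  ∀ (f : A.domain) (g : C.adjoint.domain),
    ⟪(g : K), X (A f)⟫_ℂ - ⟪C.adjoint g, X (f : H)⟫_ℂ
      + ⟪(g : K), X (B (X (f : H)))⟫_ℂ = ⟪(g : K), D (f : H)⟫_ℂ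

/-- `X` is a strong solution of the Riccati equation `XA - CX + XBX = D`. -/
def IsStrongSolutionRiccati (A : H →ₗ.[ℂ] H) (C : K →ₗ.[ℂ] K) (B : K →L[ℂ] H)
    (D X : H →L[ℂ] K) : Prop :=
  ∀ f : A.domain, ∃ h : X (f : H) ∈ C.domain,
    X (A f) - C ⟨X (f : H), h⟩ + X (B (X (f : H))) = D (f : H)

/-- The Riemann–Stieltjes sum for the left integral `∫_{spec(C) ∩ Ω} dE(ζ) G(ζ)`:
only partition rectangles meeting the spectrum contribute, with tags `tag j k`
chosen per rectangle. -/
def specLeftSum (E : SpectralMeasure K) (G : ℂ → (H →L[ℂ] K))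
    {a b c d : ℝ} (P : TaggedPartition a b) (Q : TaggedPartition c d)
    (tag : ℕ → ℕ → ℂ) : H →L[ℂ] K :=
  ∑ j ∈ Finset.range P.n, ∑ k ∈ Finset.range Q.n,
    if (rectC (P.pts j) (P.pts (j + 1)) (Q.pts k) (Q.pts (k + 1)) ∩ specSupp E).Nonempty
    then (E.proj (rectC (P.pts j) (P.pts (j + 1)) (Q.pts k) (Q.pts (k + 1)))).comp
      (G (tag j k))
    else 0

/-- Admissible tags for a spectral Riemann–Stieltjes sum: whenever a partition
rectangle meets the spectrum, the tag is taken in the intersection. -/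
def ValidTags (E : SpectralMeasure K) {a b c d : ℝ}
    (P : TaggedPartition a b) (Q : TaggedPartition c d) (tag : ℕ → ℕ → ℂ) : Prop :=
  ∀ j < P.n, ∀ k < Q.n,
    (rectC (P.pts j) (P.pts (j + 1)) (Q.pts k) (Q.pts (k + 1)) ∩ specSupp E).Nonempty →
    tag j k ∈ rectC (P.pts j) (P.pts (j + 1)) (Q.pts k) (Q.pts (k + 1)) ∩ specSupp E

/-- Convergence of `∫_{spec(C) ∩ ([a,b)×i[c,d))} dE(ζ) G(ζ)` in the strong operator
topology. -/
def HasSpecLeftIntegralStrong (E : SpectralMeasure K) (G : ℂ → (H →L[ℂ] K))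
    (a b c d : ℝ) (J : H →L[ℂ] K) : Prop :=
  ∀ x : H, ∀ ε > 0, ∃ δ > 0, ∀ (P : TaggedPartition a b) (Q : TaggedPartition c d)
    (tag : ℕ → ℕ → ℂ), ValidTags E P Q tag → P.mesh < δ → Q.mesh < δ →
    ‖specLeftSum E G P Q tag x - J x‖ < ε

/-- Convergence of `∫_{spec(C) ∩ ([a,b)×i[c,d))} dE(ζ) G(ζ)` in the uniform operator
topology. -/
def HasSpecLeftIntegralUnif (E : SpectralMeasure K) (G : ℂ → (H →L[ℂ] K))
    (a b c d : ℝ) (J : H →L[ℂ] K) : Prop :=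
  ∀ ε > 0, ∃ δ > 0, ∀ (P : TaggedPartition a b) (Q : TaggedPartition c d)
    (tag : ℕ → ℕ → ℂ), ValidTags E P Q tag → P.mesh < δ → Q.mesh < δ →
    ‖specLeftSum E G P Q tag - J‖ < ε

/-- The improper integral `∫_{spec(C)} dE(ζ) G(ζ)` in the strong operator topology:
the strong limit, over exhausting finite rectangles, of the integrals over
`spec(C) ∩ ([a,b) × i[c,d))`. -/
def HasImproperSpecLeftIntegralStrong (E : SpectralMeasure K) (G : ℂ → (H →L[ℂ] K))
    (J : H →L[ℂ] K) : Prop :=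
  ∃ Jr : ℝ → ℝ → ℝ → ℝ → (H →L[ℂ] K),
    (∀ a b c d : ℝ, a < b → c < d → HasSpecLeftIntegralStrong E G a b c d (Jr a b c d)) ∧
    ∀ x : H, ∀ ε > 0, ∃ R : ℝ, ∀ a b c d : ℝ, a ≤ -R → R ≤ b → c ≤ -R → R ≤ d →
      ‖Jr a b c d x - J x‖ < ε

/-- The improper integral `∫_{spec(C)} dE(ζ) G(ζ)` in the uniform operator topology. -/
def HasImproperSpecLeftIntegralUnif (E : SpectralMeasure K) (G : ℂ → (H →L[ℂ] K))
    (J : H →L[ℂ] K) : Prop :=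
  ∃ Jr : ℝ → ℝ → ℝ → ℝ → (H →L[ℂ] K),
    (∀ a b c d : ℝ, a < b → c < d → HasSpecLeftIntegralUnif E G a b c d (Jr a b c d)) ∧
    ∀ ε > 0, ∃ R : ℝ, ∀ a b c d : ℝ, a ≤ -R → R ≤ b → c ≤ -R → R ≤ d →
      ‖Jr a b c d - J‖ < ε

/-- The improper left integral `∫_{ℝ²} dE G` (uniform operator topology) as a limit
over exhausting finite rectangles. -/
def HasImproperLeftIntegralUnif (E : SpectralMeasure K) (G : ℝ → ℝ → (H →L[ℂ] K))
    (J : H →L[ℂ] K) : Prop :=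
  ∃ Jr : ℝ → ℝ → ℝ → ℝ → (H →L[ℂ] K),
    (∀ a b c d : ℝ, a < b → c < d → HasLeftIntegralUnif E G a b c d (Jr a b c d)) ∧
    ∀ ε > 0, ∃ R : ℝ, ∀ a b c d : ℝ, a ≤ -R → R ≤ b → c ≤ -R → R ≤ d →
      ‖Jr a b c d - J‖ < ε

namespace SylAux

lemma pyth {ι : Type*} (s : Finset ι) (f : ι → K)
    (h : ∀ i ∈ s, ∀ j ∈ s, i ≠ j → ⟪f i, f j⟫_ℂ = 0) :
    ‖∑ i ∈ s, f i‖ ^ 2 = ∑ i ∈ s, ‖f i‖ ^ 2 := by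
  classical
  induction s using Finset.induction with
  | empty => simp
  | @insert a0 t0 hx ih =>
    have horth : ⟪f a0, ∑ i ∈ t0, f i⟫_ℂ = 0 := by
      rw [inner_sum]
      refine Finset.sum_eq_zero fun i hi => ?_
      exact h a0 (Finset.mem_insert_self a0 t0) i (Finset.mem_insert_of_mem hi)
        (fun hh => hx (hh ▸ hi))
    have hkey := norm_add_sq_eq_norm_sq_add_norm_sq_of_inner_eq_zero (f a0) (∑ i ∈ t0, f i) horth
    rw [Finset.sum_insert hx, Finset.sum_insert hx, ← ih
      (fun i hi j hj hij => h i (Finset.mem_insert_of_mem hi) j (Finset.mem_insert_of_mem hj) hij)]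
    nlinarith [hkey]

lemma sum_range_mul {M : Type*} [AddCommMonoid M] (a b : ℕ) (f : ℕ → ℕ → M) :
    ∑ m ∈ Finset.range (a * b), f (m / b) (m % b)
      = ∑ i ∈ Finset.range a, ∑ j ∈ Finset.range b, f i j := by
  rcases Nat.eq_zero_or_pos b with hb | hb
  · simp [hb]
  induction a with
  | zero => simp
  | succ a ih =>
    rw [Nat.succ_mul, Finset.sum_range_add, ih, Finset.sum_range_succ]
    congr 1
    refine Finset.sum_congr rfl fun x hx => ?_
    rw [Finset.mem_range] at hx
    rw [mul_comm a b, Nat.mul_add_div hb, Nat.mul_add_mod, Nat.div_eq_of_lt hx,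
      Nat.mod_eq_of_lt hx, Nat.add_zero]

lemma opnorm_sq_le (T : H →L[ℂ] K) (M : ℝ) (hM : 0 ≤ M)
    (h : ∀ x : H, ‖T x‖ ^ 2 ≤ M * ‖x‖ ^ 2) : ‖T‖ ^ 2 ≤ M := by
  have hT : ‖T‖ ≤ Real.sqrt M := by
    refine T.opNorm_le_bound (Real.sqrt_nonneg M) fun x => ?_
    have := h x
    calc ‖T x‖ = Real.sqrt (‖T x‖ ^ 2) := (Real.sqrt_sq (norm_nonneg _)).symm
      _ ≤ Real.sqrt (M * ‖x‖ ^ 2) := Real.sqrt_le_sqrt this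
      _ = Real.sqrt M * ‖x‖ := by
          rw [Real.sqrt_mul hM, Real.sqrt_sq (norm_nonneg _)]
  calc ‖T‖ ^ 2 ≤ Real.sqrt M ^ 2 := by
        have := norm_nonneg T
        nlinarith [Real.sqrt_nonneg M]
    _ = M := Real.sq_sqrt hM

lemma measurableSet_rectC (l l' m m' : ℝ) : MeasurableSet (rectC l l' m m') := by
  have : rectC l l' m m' = ({z : ℂ | l ≤ z.re} ∩ {z : ℂ | z.re < l'}) ∩
      ({z : ℂ | m ≤ z.im} ∩ {z : ℂ | z.im < m'}) := by
    ext z; simp [rectC]; tauto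
  rw [this]
  exact (((measurableSet_le measurable_const Complex.measurable_re).inter
    (measurableSet_lt Complex.measurable_re measurable_const)).inter
    ((measurableSet_le measurable_const Complex.measurable_im).inter
    (measurableSet_lt Complex.measurable_im measurable_const)))

lemma proj_empty (E : SpectralMeasure K) : E.proj ∅ = 0 := by
  have := E.add_union MeasurableSet.empty MeasurableSet.empty (disjoint_bot_left)
  rw [Set.union_empty] at this
  have h2 : E.proj ∅ + E.proj ∅ = E.proj ∅ + 0 := by rw [← this, add_zero]
  exact (add_left_cancel h2)

lemma proj_inner (E : SpectralMeasure K) {Ω : Set ℂ} (hΩ : MeasurableSet Ω) (u v : K) :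
    ⟪E.proj Ω u, v⟫_ℂ = ⟪u, E.proj Ω v⟫_ℂ := by
  have h := ContinuousLinearMap.isSelfAdjoint_iff'.mp (E.selfAdjoint hΩ)
  conv_lhs => rw [← h]
  exact ContinuousLinearMap.adjoint_inner_left _ _ _

lemma inner_proj_proj (E : SpectralMeasure K) {A B : Set ℂ} (hA : MeasurableSet A)
    (hB : MeasurableSet B) (u v : K) :
    ⟪E.proj A u, E.proj B v⟫_ℂ = ⟪u, E.proj (A ∩ B) v⟫_ℂ := by
  rw [proj_inner E hA, E.mul_inter hA hB]; rfl

lemma proj_norm_le (E : SpectralMeasure K) {Ω : Set ℂ} (hΩ : MeasurableSet Ω) (x : K) :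
    ‖E.proj Ω x‖ ≤ ‖x‖ := by
  have h1 : ‖E.proj Ω x‖ ^ 2 = RCLike.re ⟪E.proj Ω x, E.proj Ω x⟫_ℂ :=
    (inner_self_eq_norm_sq _).symm
  rw [inner_proj_proj E hΩ hΩ, Set.inter_self] at h1
  have h2 : RCLike.re ⟪x, E.proj Ω x⟫_ℂ ≤ |RCLike.re ⟪x, E.proj Ω x⟫_ℂ| := le_abs_self _
  have h2' : |RCLike.re ⟪x, E.proj Ω x⟫_ℂ| ≤ ‖⟪x, E.proj Ω x⟫_ℂ‖ := RCLike.abs_re_le_norm _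
  have h3 : ‖⟪x, E.proj Ω x⟫_ℂ‖ ≤ ‖x‖ * ‖E.proj Ω x‖ := norm_inner_le_norm _ _
  nlinarith [norm_nonneg (E.proj Ω x), norm_nonneg x]

lemma normTstar (E : SpectralMeasure K) {S : Set ℂ} (hS : MeasurableSet S) (Y : H →L[ℂ] K) :
    ‖(ContinuousLinearMap.adjoint Y).comp ((E.proj S).comp Y)‖ = ‖(E.proj S).comp Y‖ ^ 2 := by
  have hP := ContinuousLinearMap.isSelfAdjoint_iff'.mp (E.selfAdjoint hS)
  have hPP : (E.proj S).comp (E.proj S) = E.proj S := by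
    rw [← E.mul_inter hS hS, Set.inter_self]
  have h1 : (ContinuousLinearMap.adjoint ((E.proj S).comp Y)).comp ((E.proj S).comp Y)
      = (ContinuousLinearMap.adjoint Y).comp ((E.proj S).comp Y) := by
    rw [ContinuousLinearMap.adjoint_comp, hP, ContinuousLinearMap.comp_assoc,
      ← ContinuousLinearMap.comp_assoc (E.proj S) (E.proj S) Y, hPP]
  rw [← h1, ContinuousLinearMap.norm_adjoint_comp_self, sq]

lemma zero_mem_EnormSet (E : SpectralMeasure K) (Y : H →L[ℂ] K) : 0 ∈ EnormSet E Y :=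
  ⟨0, fun _ => ∅, fun _ => MeasurableSet.empty, fun i hi => absurd hi (Nat.not_lt_zero i),
    by simp⟩

lemma sSup_EnormSet_nonneg (E : SpectralMeasure K) (Y : H →L[ℂ] K)
    (hY : BddAbove (EnormSet E Y)) : 0 ≤ sSup (EnormSet E Y) :=
  le_csSup hY (zero_mem_EnormSet E Y)

lemma pts_mono_le {a b : ℝ} (P : TaggedPartition a b) {i j : ℕ} (hij : i ≤ j) (hj : j ≤ P.n) :
    P.pts i ≤ P.pts j := by
  induction hij with
  | refl => exact le_refl _
  | @step m hm ih =>
    exact le_trans (ih (le_trans (Nat.le_succ m) hj))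
      (le_of_lt (P.mono m (Nat.lt_of_succ_le hj)))

lemma rect_disjoint {a b c d : ℝ} (P : TaggedPartition a b) (Q : TaggedPartition c d)
    {j k j' k' : ℕ} (hj : j < P.n) (hk : k < Q.n) (hj' : j' < P.n) (hk' : k' < Q.n)
    (hne : (j, k) ≠ (j', k')) :
    Disjoint (rectC (P.pts j) (P.pts (j + 1)) (Q.pts k) (Q.pts (k + 1)))
      (rectC (P.pts j') (P.pts (j' + 1)) (Q.pts k') (Q.pts (k' + 1))) := by
  rw [Set.disjoint_left]
  rintro z ⟨h1, h2, h3, h4⟩ ⟨h1', h2', h3', h4'⟩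
  rcases Nat.lt_trichotomy j j' with hjj | hjj | hjj
  · have : P.pts (j + 1) ≤ P.pts j' := pts_mono_le P hjj (le_of_lt hj')
    linarith
  · subst hjj
    rcases Nat.lt_trichotomy k k' with hkk | hkk | hkk
    · have : Q.pts (k + 1) ≤ Q.pts k' := pts_mono_le Q hkk (le_of_lt hk')
      linarith
    · exact hne (by rw [hkk])
    · have : Q.pts (k' + 1) ≤ Q.pts k := pts_mono_le Q hkk (le_of_lt hk)
      linarith
  · have : P.pts (j' + 1) ≤ P.pts j := pts_mono_le P hjj (le_of_lt hj)
    linarith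

/-- A uniform tagged partition of `[a,b)`. -/
def unifPartition (a b : ℝ) (hab : a < b) (n : ℕ) (hn : 0 < n) : TaggedPartition a b where
  n := n
  npos := hn
  pts := fun i => a + i * ((b - a) / n)
  tags := fun i => a + i * ((b - a) / n)
  mono := by
    intro i _
    have h : (0 : ℝ) < (b - a) / n := div_pos (by linarith) (by exact_mod_cast hn)
    push_cast
    nlinarith
  first := by simp
  last := by
    have hn' : (n : ℝ) ≠ 0 := by exact_mod_cast hn.ne'
    field_simp
    ring
  tag_mem := by
    intro i _
    refine ⟨le_refl _, ?_⟩
    have h : (0 : ℝ) < (b - a) / n := div_pos (by linarith) (by exact_mod_cast hn)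
    push_cast
    nlinarith

lemma unifPartition_mesh (a b : ℝ) (hab : a < b) (n : ℕ) (hn : 0 < n) :
    (unifPartition a b hab n hn).mesh = (b - a) / n := by
  have hset : {r : ℝ | ∃ i < (unifPartition a b hab n hn).n,
      r = (unifPartition a b hab n hn).pts (i + 1) - (unifPartition a b hab n hn).pts i}
      = {(b - a) / n} := by
    ext r
    simp only [Set.mem_setOf_eq, Set.mem_singleton_iff, unifPartition]
    constructor
    · rintro ⟨i, _, rfl⟩
      push_cast
      ring
    · intro hr
      exact ⟨0, hn, by rw [hr]; push_cast; ring⟩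
  rw [TaggedPartition.mesh, hset, csSup_singleton]

lemma exists_unif_partition (a b : ℝ) (hab : a < b) (δ' : ℝ) (hδ' : 0 < δ') :
    ∃ P : TaggedPartition a b, P.mesh < δ' := by
  set n : ℕ := ⌊(b - a) / δ'⌋₊ + 1 with hn
  have hn0 : 0 < n := Nat.succ_pos _
  refine ⟨unifPartition a b hab n hn0, ?_⟩
  rw [unifPartition_mesh]
  have h1 : (b - a) / δ' < n := by
    rw [hn]; push_cast; exact Nat.lt_floor_add_one _
  rw [div_lt_iff₀ (by exact_mod_cast hn0)]
  rw [div_lt_iff₀ hδ'] at h1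
  linarith [mul_comm δ' (n : ℝ)]

lemma partition_sum_bound (E : SpectralMeasure K) (D : H →L[ℂ] K) (RA : ℂ → (H →L[ℂ] H))
    (δ : ℝ) (hδ0 : 0 < δ) (hRAb : ∀ ζ ∈ specSupp E, ‖RA ζ‖ ≤ δ⁻¹)
    (hD : BddAbove (EnormSet E D))
    {a b c d : ℝ} (P : TaggedPartition a b) (Q : TaggedPartition c d)
    (tag : ℕ → ℕ → ℂ) (hvalid : ValidTags E P Q tag)
    (n : ℕ) (Ω : ℕ → Set ℂ) (hmeas : ∀ i, MeasurableSet (Ω i))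
    (hdis : ∀ i < n, ∀ j < n, i ≠ j → Disjoint (Ω i) (Ω j)) :
    ∑ i ∈ Finset.range n,
        ‖(E.proj (Ω i)).comp (specLeftSum E (fun ζ => D.comp (RA ζ)) P Q tag)‖ ^ 2
      ≤ δ⁻¹ ^ 2 * sSup (EnormSet E D) := by
  classical
  set S := specLeftSum E (fun ζ => D.comp (RA ζ)) P Q tag with hSdef
  have hrectmeas : ∀ j k : ℕ, MeasurableSet
      (rectC (P.pts j) (P.pts (j + 1)) (Q.pts k) (Q.pts (k + 1))) :=
    fun j k => measurableSet_rectC _ _ _ _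
  set rect : ℕ → ℕ → Set ℂ := fun j k =>
    rectC (P.pts j) (P.pts (j + 1)) (Q.pts k) (Q.pts (k + 1)) with hrectdef
  set cc : ℕ → ℕ → ℕ → ℝ := fun i j k => ‖(E.proj (Ω i ∩ rect j k)).comp D‖ with hccdef
  -- Step 1 : pointwise bound for each i
  have step1 : ∀ i : ℕ, ‖(E.proj (Ω i)).comp S‖ ^ 2
      ≤ δ⁻¹ ^ 2 * (∑ j ∈ Finset.range P.n, ∑ k ∈ Finset.range Q.n, cc i j k ^ 2) := by
    intro i
    refine opnorm_sq_le _ _ (by positivity) fun x => ?_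
    set term : ℕ → ℕ → K := fun j k =>
      if (rect j k ∩ specSupp E).Nonempty
      then E.proj (Ω i ∩ rect j k) ((D.comp (RA (tag j k))) x) else 0 with htermdef
    have hptw : ((E.proj (Ω i)).comp S) x
        = ∑ p ∈ Finset.range P.n ×ˢ Finset.range Q.n, term p.1 p.2 := by
      rw [Finset.sum_product']
      simp only [ContinuousLinearMap.comp_apply, hSdef, specLeftSum,
        ContinuousLinearMap.sum_apply, map_sum]
      refine Finset.sum_congr rfl fun j _ => Finset.sum_congr rfl fun k _ => ?_
      simp only [htermdef]
      by_cases hmeet : (rect j k ∩ specSupp E).Nonempty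
      · rw [if_pos hmeet, if_pos hmeet, ContinuousLinearMap.comp_apply,
          ← ContinuousLinearMap.comp_apply (E.proj (Ω i)),
          ← E.mul_inter (hmeas i) (hrectmeas j k)]
      · rw [if_neg hmeet, if_neg hmeet, ContinuousLinearMap.zero_apply, map_zero]
    have horth : ∀ p ∈ Finset.range P.n ×ˢ Finset.range Q.n,
        ∀ q ∈ Finset.range P.n ×ˢ Finset.range Q.n, p ≠ q → ⟪term p.1 p.2, term q.1 q.2⟫_ℂ = 0 := by
      intro p hp q hq hpq
      simp only [Finset.mem_product, Finset.mem_range] at hp hq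
      simp only [htermdef]
      split_ifs with h1 h2 h2
      · rw [inner_proj_proj E ((hmeas i).inter (hrectmeas p.1 p.2))
          ((hmeas i).inter (hrectmeas q.1 q.2))]
        have hd : Disjoint (Ω i ∩ rect p.1 p.2) (Ω i ∩ rect q.1 q.2) :=
          Disjoint.mono Set.inter_subset_right Set.inter_subset_right
            (rect_disjoint P Q hp.1 hp.2 hq.1 hq.2
              (by intro hEq; exact hpq (Prod.ext (congrArg Prod.fst hEq) (congrArg Prod.snd hEq))))
        rw [Set.disjoint_iff_inter_eq_empty.mp hd, proj_empty,
          ContinuousLinearMap.zero_apply, inner_zero_right]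
      · exact inner_zero_right _
      · exact inner_zero_left _
      · exact inner_zero_left _
    have hterm : ∀ p ∈ Finset.range P.n ×ˢ Finset.range Q.n,
        ‖term p.1 p.2‖ ^ 2 ≤ cc i p.1 p.2 ^ 2 * (δ⁻¹ * ‖x‖) ^ 2 := by
      intro p hp
      simp only [Finset.mem_product, Finset.mem_range] at hp
      simp only [htermdef]
      split_ifs with hmeet
      · have htg : tag p.1 p.2 ∈ specSupp E :=
          (hvalid p.1 hp.1 p.2 hp.2 hmeet).2
        have hRx : ‖RA (tag p.1 p.2) x‖ ≤ δ⁻¹ * ‖x‖ := by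
          calc ‖RA (tag p.1 p.2) x‖ ≤ ‖RA (tag p.1 p.2)‖ * ‖x‖ :=
                ContinuousLinearMap.le_opNorm _ _
            _ ≤ δ⁻¹ * ‖x‖ := mul_le_mul_of_nonneg_right (hRAb _ htg) (norm_nonneg x)
        have h1 : ‖E.proj (Ω i ∩ rect p.1 p.2) ((D.comp (RA (tag p.1 p.2))) x)‖
            ≤ cc i p.1 p.2 * (δ⁻¹ * ‖x‖) := by
          calc ‖E.proj (Ω i ∩ rect p.1 p.2) (D (RA (tag p.1 p.2) x))‖
              = ‖((E.proj (Ω i ∩ rect p.1 p.2)).comp D) (RA (tag p.1 p.2) x)‖ := rfl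
            _ ≤ cc i p.1 p.2 * ‖RA (tag p.1 p.2) x‖ := ContinuousLinearMap.le_opNorm _ _
            _ ≤ cc i p.1 p.2 * (δ⁻¹ * ‖x‖) :=
                mul_le_mul_of_nonneg_left hRx (norm_nonneg _)
        have h0 : (0:ℝ) ≤ ‖E.proj (Ω i ∩ rect p.1 p.2) ((D.comp (RA (tag p.1 p.2))) x)‖ :=
          norm_nonneg _
        nlinarith [h1, h0]
      · rw [norm_zero, zero_pow (by norm_num : (2:ℕ) ≠ 0)]
        positivity
    calc ‖((E.proj (Ω i)).comp S) x‖ ^ 2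
        = ∑ p ∈ Finset.range P.n ×ˢ Finset.range Q.n, ‖term p.1 p.2‖ ^ 2 := by
          rw [hptw]; exact pyth _ _ (fun p hp q hq hpq => horth p hp q hq hpq)
      _ ≤ ∑ p ∈ Finset.range P.n ×ˢ Finset.range Q.n, cc i p.1 p.2 ^ 2 * (δ⁻¹ * ‖x‖) ^ 2 :=
          Finset.sum_le_sum hterm
      _ = (∑ p ∈ Finset.range P.n ×ˢ Finset.range Q.n, cc i p.1 p.2 ^ 2) * (δ⁻¹ * ‖x‖) ^ 2 :=
          (Finset.sum_mul _ _ _).symm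
      _ = δ⁻¹ ^ 2 * (∑ j ∈ Finset.range P.n, ∑ k ∈ Finset.range Q.n, cc i j k ^ 2) * ‖x‖ ^ 2 := by
          rw [Finset.sum_product]; ring
  -- Step 2 : the triple sum is an element of `EnormSet E D`
  have hmem : (∑ i ∈ Finset.range n, ∑ j ∈ Finset.range P.n, ∑ k ∈ Finset.range Q.n,
      cc i j k ^ 2) ∈ EnormSet E D := by
    have hQ0 : 0 < Q.n := Q.npos
    refine ⟨n * (P.n * Q.n),
      fun m => Ω (m / (P.n * Q.n)) ∩
        rect (m % (P.n * Q.n) / Q.n) (m % (P.n * Q.n) % Q.n),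
      fun m => (hmeas _).inter (hrectmeas _ _), ?_, ?_⟩
    · intro m hm m' hm' hne
      have hpq : 0 < P.n * Q.n := by
        rcases Nat.eq_zero_or_pos (P.n * Q.n) with h0 | h0
        · rw [h0, Nat.mul_zero] at hm; omega
        · exact h0
      have hi : m / (P.n * Q.n) < n := Nat.div_lt_of_lt_mul (by rwa [mul_comm] at hm)
      have hi' : m' / (P.n * Q.n) < n := Nat.div_lt_of_lt_mul (by rwa [mul_comm] at hm')
      have hj : m % (P.n * Q.n) / Q.n < P.n :=
        Nat.div_lt_of_lt_mul (by rw [mul_comm Q.n P.n]; exact Nat.mod_lt _ hpq)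
      have hj' : m' % (P.n * Q.n) / Q.n < P.n :=
        Nat.div_lt_of_lt_mul (by rw [mul_comm Q.n P.n]; exact Nat.mod_lt _ hpq)
      have hk : m % (P.n * Q.n) % Q.n < Q.n := Nat.mod_lt _ hQ0
      have hk' : m' % (P.n * Q.n) % Q.n < Q.n := Nat.mod_lt _ hQ0
      by_cases hii : m / (P.n * Q.n) = m' / (P.n * Q.n)
      · have hne2 : (m % (P.n * Q.n) / Q.n, m % (P.n * Q.n) % Q.n)
            ≠ (m' % (P.n * Q.n) / Q.n, m' % (P.n * Q.n) % Q.n) := by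
          intro hEq
          apply hne
          have e1 : m % (P.n * Q.n) / Q.n = m' % (P.n * Q.n) / Q.n := congrArg Prod.fst hEq
          have e2 : m % (P.n * Q.n) % Q.n = m' % (P.n * Q.n) % Q.n := congrArg Prod.snd hEq
          have e3 : m % (P.n * Q.n) = m' % (P.n * Q.n) := by
            rw [← Nat.div_add_mod (m % (P.n * Q.n)) Q.n, ← Nat.div_add_mod (m' % (P.n * Q.n)) Q.n,
              e1, e2]
          rw [← Nat.div_add_mod m (P.n * Q.n), ← Nat.div_add_mod m' (P.n * Q.n), hii, e3]
        exact Disjoint.mono Set.inter_subset_right Set.inter_subset_right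
          (rect_disjoint P Q hj hk hj' hk' hne2)
      · exact Disjoint.mono Set.inter_subset_left Set.inter_subset_left
          (hdis _ hi _ hi' hii)
    · calc ∑ i ∈ Finset.range n, ∑ j ∈ Finset.range P.n, ∑ k ∈ Finset.range Q.n, cc i j k ^ 2
          = ∑ i ∈ Finset.range n, ∑ j ∈ Finset.range P.n, ∑ k ∈ Finset.range Q.n,
            ‖(ContinuousLinearMap.adjoint D).comp ((E.proj (Ω i ∩ rect j k)).comp D)‖ := by
            refine Finset.sum_congr rfl fun i _ => Finset.sum_congr rfl fun j _ =>
              Finset.sum_congr rfl fun k _ => ?_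
            rw [normTstar E ((hmeas i).inter (hrectmeas j k)) D]
        _ = ∑ i ∈ Finset.range n, ∑ r ∈ Finset.range (P.n * Q.n),
            ‖(ContinuousLinearMap.adjoint D).comp
              ((E.proj (Ω i ∩ rect (r / Q.n) (r % Q.n))).comp D)‖ := by
            refine Finset.sum_congr rfl fun i _ => ?_
            exact (sum_range_mul P.n Q.n fun j k =>
              ‖(ContinuousLinearMap.adjoint D).comp ((E.proj (Ω i ∩ rect j k)).comp D)‖).symm
        _ = ∑ m ∈ Finset.range (n * (P.n * Q.n)),
            ‖(ContinuousLinearMap.adjoint D).comp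
              ((E.proj (Ω (m / (P.n * Q.n)) ∩
                rect (m % (P.n * Q.n) / Q.n) (m % (P.n * Q.n) % Q.n))).comp D)‖ := by
            exact (sum_range_mul n (P.n * Q.n) fun i r =>
              ‖(ContinuousLinearMap.adjoint D).comp
                ((E.proj (Ω i ∩ rect (r / Q.n) (r % Q.n))).comp D)‖).symm
  -- Combine
  calc ∑ i ∈ Finset.range n, ‖(E.proj (Ω i)).comp S‖ ^ 2
      ≤ ∑ i ∈ Finset.range n,
          δ⁻¹ ^ 2 * (∑ j ∈ Finset.range P.n, ∑ k ∈ Finset.range Q.n, cc i j k ^ 2) :=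
        Finset.sum_le_sum fun i _ => step1 i
    _ = δ⁻¹ ^ 2 * ∑ i ∈ Finset.range n, ∑ j ∈ Finset.range P.n, ∑ k ∈ Finset.range Q.n,
          cc i j k ^ 2 := (Finset.mul_sum _ _ _).symm
    _ ≤ δ⁻¹ ^ 2 * sSup (EnormSet E D) :=
        mul_le_mul_of_nonneg_left (le_csSup hD hmem) (by positivity)

lemma approx_specLeftSum (E : SpectralMeasure K) (G : ℂ → (H →L[ℂ] K)) (X : H →L[ℂ] K)
    (hX : HasImproperSpecLeftIntegralUnif E G X) (ε : ℝ) (hε : 0 < ε) :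
    ∃ (a b c d : ℝ) (P : TaggedPartition a b) (Q : TaggedPartition c d) (tag : ℕ → ℕ → ℂ),
      ValidTags E P Q tag ∧ ‖specLeftSum E G P Q tag - X‖ < ε := by
  classical
  obtain ⟨Jr, hJr, hlim⟩ := hX
  obtain ⟨R, hR⟩ := hlim (ε / 2) (by linarith)
  have hab : -(|R| + 1) < |R| + 1 := by have := abs_nonneg R; linarith
  have h1 : -(|R| + 1) ≤ -R := by have := le_abs_self R; linarith
  have h2 : R ≤ |R| + 1 := by have := le_abs_self R; linarith
  have hJ := hR (-(|R| + 1)) (|R| + 1) (-(|R| + 1)) (|R| + 1) h1 h2 h1 h2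
  obtain ⟨δ', hδ'0, hδ'⟩ := hJr (-(|R| + 1)) (|R| + 1) (-(|R| + 1)) (|R| + 1) hab hab
    (ε / 2) (by linarith)
  obtain ⟨P, hP⟩ := exists_unif_partition _ _ hab δ' hδ'0
  obtain ⟨Q, hQ⟩ := exists_unif_partition _ _ hab δ' hδ'0
  set tag : ℕ → ℕ → ℂ := fun j k =>
    if h : (rectC (P.pts j) (P.pts (j + 1)) (Q.pts k) (Q.pts (k + 1)) ∩ specSupp E).Nonempty
    then h.choose else 0 with htag
  have hvalid : ValidTags E P Q tag := by
    intro j _ k _ hne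
    rw [htag]
    simp only
    rw [dif_pos hne]
    exact hne.choose_spec
  refine ⟨_, _, _, _, P, Q, tag, hvalid, ?_⟩
  have h3 := hδ' P Q tag hvalid hP hQ
  calc ‖specLeftSum E G P Q tag - X‖
      = ‖(specLeftSum E G P Q tag - Jr (-(|R| + 1)) (|R| + 1) (-(|R| + 1)) (|R| + 1))
          + (Jr (-(|R| + 1)) (|R| + 1) (-(|R| + 1)) (|R| + 1) - X)‖ := by
        rw [sub_add_sub_cancel]
    _ ≤ _ + _ := norm_add_le _ _
    _ < ε / 2 + ε / 2 := add_lt_add h3 hJ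
    _ = ε := by ring

end SylAux


/-- if `dist(W(A), spec(C)) = δ > 0` and `‖D‖_{E_C} < ∞`, then the
strong solution `X = ∫_{spec(C)} dE_C(ζ) D (A-ζ)⁻¹` of `XA - CX = D` satisfies
`‖X‖_{E_C} ≤ δ⁻¹ ‖D‖_{E_C}` (the resolvent estimate
`‖(A-ζ)⁻¹‖ ≤ 1/dist(ζ, W(A))` being assumed). -/
theorem sylvester_Enorm_numrange_bound (A : H →ₗ.[ℂ] H)
    (hAd : Dense (A.domain : Set H)) (hAc : A.IsClosed)
    (E : SpectralMeasure K) (D : H →L[ℂ] K)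
    (δ : ℝ) (hδ0 : 0 < δ)
    (hδ : ∀ z ∈ specSupp E, ∀ w ∈ numRange A, δ ≤ dist z w)
    (RA : ℂ → (H →L[ℂ] H)) (hRA : ∀ ζ ∈ specSupp E, IsResolventAt A ζ (RA ζ))
    (hRAbound : ∀ ζ ∈ specSupp E, ‖RA ζ‖ ≤ (Metric.infDist ζ (numRange A))⁻¹)
    (hD : BddAbove (EnormSet E D)) :
    ∀ X : H →L[ℂ] K,
      HasImproperSpecLeftIntegralUnif E (fun ζ => D.comp (RA ζ)) X →
      BddAbove (EnormSet E X) ∧ Enorm E X ≤ δ⁻¹ * Enorm E D := by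
  intro X hX
  have hRAb : ∀ ζ ∈ specSupp E, ‖RA ζ‖ ≤ δ⁻¹ := by
    intro ζ hζ
    rcases (numRange A).eq_empty_or_nonempty with hW | hW
    · have h := hRAbound ζ hζ
      rw [hW, Metric.infDist_empty] at h
      simp only [inv_zero] at h
      exact le_trans h (by positivity)
    · have h1 : δ ≤ Metric.infDist ζ (numRange A) := by
        by_contra hcon
        push_neg at hcon
        obtain ⟨w, hw, hwd⟩ := (Metric.infDist_lt_iff hW).mp hcon
        exact absurd (hδ ζ hζ w hw) (by linarith)
      exact le_trans (hRAbound ζ hζ)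
        (inv_anti₀ hδ0 h1)
  have hSD0 : 0 ≤ sSup (EnormSet E D) := SylAux.sSup_EnormSet_nonneg E D hD
  set B : ℝ := δ⁻¹ ^ 2 * sSup (EnormSet E D) with hBdef
  have hB0 : 0 ≤ B := by positivity
  have main : ∀ r ∈ EnormSet E X, r ≤ B := by
    rintro r ⟨n, Ω, hmeas, hdis, rfl⟩
    have hrw : ∀ i ∈ Finset.range n,
        ‖(ContinuousLinearMap.adjoint X).comp ((E.proj (Ω i)).comp X)‖
          = ‖(E.proj (Ω i)).comp X‖ ^ 2 :=
      fun i _ => SylAux.normTstar E (hmeas i) X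
    rw [Finset.sum_congr rfl hrw]
    refine le_of_forall_pos_le_add fun ε hε => ?_
    set κ : ℝ := n * (2 * ‖X‖ + 3) with hκdef
    have hκ0 : 0 ≤ κ := by positivity
    set η : ℝ := min 1 (ε / (κ + 1)) with hηdef
    have hη0 : 0 < η := lt_min one_pos (by positivity)
    have hη1 : η ≤ 1 := min_le_left _ _
    have hη2 : η ≤ ε / (κ + 1) := min_le_right _ _
    obtain ⟨a', b', c', d', P, Q, tag, hvalid, hnear⟩ :=
      SylAux.approx_specLeftSum E (fun ζ => D.comp (RA ζ)) X hX η hη0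
    set S := specLeftSum E (fun ζ => D.comp (RA ζ)) P Q tag with hSdef
    have hXS : ‖X - S‖ ≤ η := by
      rw [norm_sub_rev]; exact le_of_lt hnear
    have hi : ∀ i : ℕ, ‖(E.proj (Ω i)).comp X‖ ≤ ‖(E.proj (Ω i)).comp S‖ + η := by
      intro i
      refine ContinuousLinearMap.opNorm_le_bound _
        (add_nonneg (norm_nonneg _) hη0.le) fun x => ?_
      have hxd : X x = S x + (X - S) x := by
        simp only [ContinuousLinearMap.sub_apply]
        abel
      calc ‖((E.proj (Ω i)).comp X) x‖
          = ‖E.proj (Ω i) (S x) + E.proj (Ω i) ((X - S) x)‖ := by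
            rw [ContinuousLinearMap.comp_apply, hxd, map_add]
        _ ≤ ‖E.proj (Ω i) (S x)‖ + ‖E.proj (Ω i) ((X - S) x)‖ := norm_add_le _ _
        _ ≤ ‖(E.proj (Ω i)).comp S‖ * ‖x‖ + ‖(X - S) x‖ := by
            gcongr
            · exact ContinuousLinearMap.le_opNorm ((E.proj (Ω i)).comp S) x
            · exact SylAux.proj_norm_le E (hmeas i) _
        _ ≤ ‖(E.proj (Ω i)).comp S‖ * ‖x‖ + η * ‖x‖ := by
            gcongr
            exact le_trans (ContinuousLinearMap.le_opNorm _ _)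
              (mul_le_mul_of_nonneg_right hXS (norm_nonneg x))
        _ = (‖(E.proj (Ω i)).comp S‖ + η) * ‖x‖ := by ring
    have hSb : ∀ i : ℕ, ‖(E.proj (Ω i)).comp S‖ ≤ ‖X‖ + 1 := by
      intro i
      refine ContinuousLinearMap.opNorm_le_bound _ (by positivity) fun x => ?_
      calc ‖((E.proj (Ω i)).comp S) x‖ ≤ ‖S x‖ :=
            SylAux.proj_norm_le E (hmeas i) _
        _ ≤ ‖S‖ * ‖x‖ := ContinuousLinearMap.le_opNorm _ _
        _ ≤ (‖X‖ + 1) * ‖x‖ := by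
            have : ‖S‖ ≤ ‖X‖ + η := by
              calc ‖S‖ = ‖X + (S - X)‖ := by rw [add_sub_cancel]
                _ ≤ ‖X‖ + ‖S - X‖ := norm_add_le _ _
                _ ≤ ‖X‖ + η := by linarith [hnear]
            have h2 : ‖S‖ ≤ ‖X‖ + 1 := by linarith
            exact mul_le_mul_of_nonneg_right h2 (norm_nonneg x)
    have hsq : ∀ i ∈ Finset.range n,
        ‖(E.proj (Ω i)).comp X‖ ^ 2 ≤ ‖(E.proj (Ω i)).comp S‖ ^ 2 + (2 * ‖X‖ + 3) * η := by
      intro i _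
      have h1 := hi i
      have h2 := hSb i
      have h3 : (0:ℝ) ≤ ‖(E.proj (Ω i)).comp X‖ := norm_nonneg _
      have h4 : (0:ℝ) ≤ ‖(E.proj (Ω i)).comp S‖ := norm_nonneg _
      nlinarith [hη0.le, hη1]
    have hpart := SylAux.partition_sum_bound E D RA δ hδ0 hRAb hD P Q tag hvalid n Ω hmeas hdis
    calc ∑ i ∈ Finset.range n, ‖(E.proj (Ω i)).comp X‖ ^ 2
        ≤ ∑ i ∈ Finset.range n,
            (‖(E.proj (Ω i)).comp S‖ ^ 2 + (2 * ‖X‖ + 3) * η) := Finset.sum_le_sum hsq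
      _ = (∑ i ∈ Finset.range n, ‖(E.proj (Ω i)).comp S‖ ^ 2) + n * ((2 * ‖X‖ + 3) * η) := by
          rw [Finset.sum_add_distrib, Finset.sum_const, Finset.card_range, nsmul_eq_mul]
      _ ≤ B + κ * η := by
          have : (n : ℝ) * ((2 * ‖X‖ + 3) * η) = κ * η := by rw [hκdef]; ring
          rw [this]
          exact add_le_add_left hpart _
      _ ≤ B + ε := by
          have hκη : κ * η ≤ ε := by
            have h5 : (κ + 1) * η ≤ ε := by
              have := mul_le_mul_of_nonneg_left hη2 (by positivity : (0:ℝ) ≤ κ + 1)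
              rwa [mul_div_cancel₀ _ (by positivity : κ + 1 ≠ 0)] at this
            nlinarith [hη0.le]
          linarith
  have hbdd : BddAbove (EnormSet E X) := ⟨B, fun r hr => main r hr⟩
  refine ⟨hbdd, ?_⟩
  have hsup : sSup (EnormSet E X) ≤ B :=
    csSup_le ⟨0, SylAux.zero_mem_EnormSet E X⟩ main
  calc Enorm E X = Real.sqrt (sSup (EnormSet E X)) := rfl
    _ ≤ Real.sqrt B := Real.sqrt_le_sqrt hsup
    _ = δ⁻¹ * Real.sqrt (sSup (EnormSet E D)) := by
        rw [hBdef, Real.sqrt_mul (by positivity), Real.sqrt_sq (by positivity)]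
    _ = δ⁻¹ * Enorm E D := rfl

end
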